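/- For a finitely complete category E, the bicategory Span(E) is precartesian: (i) Map(Span(E)) has finite bicategorical products, given by the terminal object of E and by A × B with projection maps the spans (1, A×B, p) and (1, A×B, r); (ii) each hom-category Span(E)(A,B) has finite products, with terminal object the span (p, A×B, r) and binary products computed by pullback over A×B. -/

import Mathlib

universe u v

open CategoryTheory CategoryTheory.Limits

/-- A span `A ← R → X` in `E`, i.e. a 1-cell of the bicategory `Span(E)`. -/
structure SpanT (E : Type u) [Category.{v} E] (A X : E) where
  R : E
  l : R ⟶ A
  r : R ⟶ X

variable {E : Type u} [Category.{v} E]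

/-- A 2-cell of `Span(E)`: a morphism of spans. -/
structure Span2 {A X : E} (s t : SpanT E A X) where
  k : s.R ⟶ t.R
  wl : k ≫ t.l = s.l
  wr : k ≫ t.r = s.r

/-- The identity 2-cell. -/
def Span2.idm {A X : E} (s : SpanT E A X) : Span2 s s :=
  ⟨𝟙 _, by simp, by simp⟩

/-- Vertical composition of 2-cells. -/
def Span2.vcomp {A X : E} {s t u : SpanT E A X} (φ : Span2 s t) (ψ : Span2 t u) :
    Span2 s u :=
  ⟨φ.k ≫ ψ.k, by rw [Category.assoc, ψ.wl, φ.wl], by rw [Category.assoc, ψ.wr, φ.wr]⟩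

/-- Invertibility of a 2-cell of spans. -/
def IsSpan2Iso {A X : E} {s t : SpanT E A X} (φ : Span2 s t) : Prop :=
  ∃ ψ : Span2 t s, φ.vcomp ψ = Span2.idm s ∧ ψ.vcomp φ = Span2.idm t

/-- A span is a map (has a right adjoint in `Span(E)`) exactly when its left
leg is invertible. -/
def IsMapSpan {A X : E} (s : SpanT E A X) : Prop := IsIso s.l

/-- Composition of spans, by pullback. -/
noncomputable def spanComp [HasPullbacks E] {A X Y : E} (s : SpanT E A X) (t : SpanT E X Y) :
    SpanT E A Y :=
  ⟨pullback s.r t.l, pullback.fst s.r t.l ≫ s.l, pullback.snd s.r t.l ≫ t.r⟩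

/-- Right whiskering of a 2-cell of spans with a span. -/
noncomputable def whiskerRSpan [HasPullbacks E] {A X Y : E} {s s' : SpanT E A X} (φ : Span2 s s')
    (t : SpanT E X Y) : Span2 (spanComp s t) (spanComp s' t) where
  k := pullback.map s.r t.l s'.r t.l φ.k (𝟙 _) (𝟙 _)
    (by rw [Category.comp_id, φ.wr]) (by simp)
  wl := by
    show _ ≫ pullback.fst s'.r t.l ≫ s'.l = pullback.fst s.r t.l ≫ s.l
    rw [← Category.assoc, pullback.lift_fst, Category.assoc, φ.wl]
  wr := by
    show _ ≫ pullback.snd s'.r t.l ≫ t.r = pullback.snd s.r t.l ≫ t.r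
    rw [← Category.assoc, pullback.lift_snd, Category.comp_id]

attribute [local simp] pullback.lift_fst pullback.lift_snd pullback.lift_fst_assoc pullback.lift_snd_assoc prod.lift_fst prod.lift_snd prod.lift_fst_assoc prod.lift_snd_assoc


lemma Span2.ext' {A X : E} {s t : SpanT E A X} {φ ψ : Span2 s t} (h : φ.k = ψ.k) : φ = ψ := by
  cases φ; cases ψ; simp_all

lemma esAux [HasFiniteLimits E] {C Z X : E} (q : C ⟶ Z) (p : Z ⟶ X)
    (f : SpanT E C X) [IsIso f.l] (hq : q ≫ p = inv f.l ≫ f.r) :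
    ∃ φ : Span2 (spanComp ⟨C, 𝟙 C, q⟩ ⟨Z, 𝟙 Z, p⟩) f, IsSpan2Iso φ := by
  have hcond : pullback.fst q (𝟙 Z) ≫ q = pullback.snd q (𝟙 Z) := by
    simpa using pullback.condition (f := q) (g := 𝟙 Z)
  refine ⟨⟨pullback.fst q (𝟙 Z) ≫ inv f.l, ?_, ?_⟩, ⟨⟨pullback.lift f.l (f.l ≫ q) (by simp), ?_, ?_⟩, ?_, ?_⟩⟩
  · show (pullback.fst q (𝟙 Z) ≫ inv f.l) ≫ f.l = pullback.fst q (𝟙 Z) ≫ 𝟙 C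
    simp
  · show (pullback.fst q (𝟙 Z) ≫ inv f.l) ≫ f.r = pullback.snd q (𝟙 Z) ≫ p
    rw [Category.assoc, ← hq, ← Category.assoc, hcond]
  · show pullback.lift f.l (f.l ≫ q) _ ≫ pullback.fst q (𝟙 Z) ≫ 𝟙 C = f.l
    simp
  · show pullback.lift f.l (f.l ≫ q) _ ≫ pullback.snd q (𝟙 Z) ≫ p = f.r
    rw [← Category.assoc, pullback.lift_snd, Category.assoc, hq]
    simp
  · apply Span2.ext'
    show (pullback.fst q (𝟙 Z) ≫ inv f.l) ≫ pullback.lift f.l (f.l ≫ q) _ = 𝟙 _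
    apply pullback.hom_ext <;> simp [hcond]
  · apply Span2.ext'
    show pullback.lift f.l (f.l ≫ q) _ ≫ pullback.fst q (𝟙 Z) ≫ inv f.l = 𝟙 _
    rw [← Category.assoc, pullback.lift_fst]
    simp

lemma ffAux [HasFiniteLimits E] {C Z X : E} (h h' : SpanT E C Z) (p : Z ⟶ X) [IsIso h'.l]
    (β : Span2 (spanComp h ⟨Z, 𝟙 Z, p⟩) (spanComp h' ⟨Z, 𝟙 Z, p⟩)) :
    (h.l ≫ inv h'.l) ≫ h'.r ≫ p = h.r ≫ p := by
  have hcond : pullback.fst h.r (𝟙 Z) ≫ h.r = pullback.snd h.r (𝟙 Z) := by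
    simpa using pullback.condition (f := h.r) (g := 𝟙 Z)
  have hcond' : pullback.fst h'.r (𝟙 Z) ≫ h'.r = pullback.snd h'.r (𝟙 Z) := by
    simpa using pullback.condition (f := h'.r) (g := 𝟙 Z)
  dsimp only [spanComp] at β
  set j : h.R ⟶ pullback h.r (𝟙 Z) := pullback.lift (𝟙 h.R) h.r (by simp) with hj
  have hwl : β.k ≫ pullback.fst h'.r (𝟙 Z) ≫ h'.l = pullback.fst h.r (𝟙 Z) ≫ h.l := by
    simpa [spanComp] using β.wl
  have hwr : β.k ≫ pullback.snd h'.r (𝟙 Z) ≫ p = pullback.snd h.r (𝟙 Z) ≫ p := by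
    simpa [spanComp] using β.wr
  have e1 : j ≫ β.k ≫ pullback.fst h'.r (𝟙 Z) = h.l ≫ inv h'.l := by
    rw [← cancel_mono h'.l]
    simp [hwl, hj]
  have e2 : j ≫ β.k ≫ pullback.snd h'.r (𝟙 Z) ≫ p = h.r ≫ p := by
    rw [hwr, hj]; simp
  calc (h.l ≫ inv h'.l) ≫ h'.r ≫ p
      = (j ≫ β.k ≫ pullback.fst h'.r (𝟙 Z)) ≫ h'.r ≫ p := by rw [e1]
    _ = j ≫ β.k ≫ pullback.snd h'.r (𝟙 Z) ≫ p := by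
        simp only [Category.assoc, ← hcond']
    _ = h.r ≫ p := e2

lemma whiskAux [HasFiniteLimits E] {C Z X : E} {h h' : SpanT E C Z} (p : Z ⟶ X) [IsIso h'.l]
    (α : Span2 h h')
    (β : Span2 (spanComp h ⟨Z, 𝟙 Z, p⟩) (spanComp h' ⟨Z, 𝟙 Z, p⟩)) :
    whiskerRSpan α ⟨Z, 𝟙 Z, p⟩ = β := by
  have hcond : pullback.fst h.r (𝟙 Z) ≫ h.r = pullback.snd h.r (𝟙 Z) := by
    simpa using pullback.condition (f := h.r) (g := 𝟙 Z)
  have hcond' : pullback.fst h'.r (𝟙 Z) ≫ h'.r = pullback.snd h'.r (𝟙 Z) := by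
    simpa using pullback.condition (f := h'.r) (g := 𝟙 Z)
  dsimp only [spanComp] at β
  have hwl : β.k ≫ pullback.fst h'.r (𝟙 Z) ≫ h'.l = pullback.fst h.r (𝟙 Z) ≫ h.l := by
    simpa [spanComp] using β.wl
  have bfst : β.k ≫ pullback.fst h'.r (𝟙 Z) = pullback.fst h.r (𝟙 Z) ≫ α.k := by
    rw [← cancel_mono h'.l]
    simp [hwl, α.wl]
  have bsnd : β.k ≫ pullback.snd h'.r (𝟙 Z) = pullback.snd h.r (𝟙 Z) := by
    calc β.k ≫ pullback.snd h'.r (𝟙 Z) = β.k ≫ (pullback.fst h'.r (𝟙 Z) ≫ h'.r) := by rw [hcond']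
      _ = (β.k ≫ pullback.fst h'.r (𝟙 Z)) ≫ h'.r := (Category.assoc _ _ _).symm
      _ = pullback.snd h.r (𝟙 Z) := by rw [bfst, Category.assoc, α.wr, hcond]
  apply Span2.ext'
  apply pullback.hom_ext
  · show (pullback.map h.r (𝟙 Z) h'.r (𝟙 Z) α.k (𝟙 _) (𝟙 _) (by rw [Category.comp_id, α.wr]) (by simp)) ≫ pullback.fst h'.r (𝟙 Z) =
      β.k ≫ pullback.fst h'.r (𝟙 Z)
    rw [bfst]; simp
  · show (pullback.map h.r (𝟙 Z) h'.r (𝟙 Z) α.k (𝟙 _) (𝟙 _) (by rw [Category.comp_id, α.wr]) (by simp)) ≫ pullback.snd h'.r (𝟙 Z) =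
      β.k ≫ pullback.snd h'.r (𝟙 Z)
    rw [bsnd]; simp
/-- STATEMENT 6: For a finitely complete category `E`, the bicategory
`Span(E)` is precartesian:
(i) `Map(Span(E))` has finite bicategorical products, given by the terminal
object of `E` (the span `A ← A → 1` being the unique map to it, up to a
unique invertible 2-cell) and by `A ⨯ B` with projection maps the spans
`(1, A ⨯ B, fst)` and `(1, A ⨯ B, snd)` (the comparison functor being an
equivalence, i.e. essentially surjective and fully faithful);
(ii) each hom-category `Span(E)(A,B)` has finite products, with terminal
object the span `(fst, A ⨯ B, snd)` and binary products computed by pullback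
over `A ⨯ B`. -/
theorem statement6 (E : Type u) [Category.{v} E] [HasFiniteLimits E] :
    -- (i) terminal object of Map(Span(E))
    (∀ A : E,
      IsMapSpan (⟨A, 𝟙 A, terminal.from A⟩ : SpanT E A (⊤_ E)) ∧
      ∀ m m' : SpanT E A (⊤_ E), IsMapSpan m → IsMapSpan m' →
        (Nonempty (Span2 m m') ∧ ∀ φ ψ : Span2 m m', φ = ψ)) ∧
    -- (i) binary products in Map(Span(E))
    (∀ A B : E,
      IsMapSpan (⟨A ⨯ B, 𝟙 _, Limits.prod.fst⟩ : SpanT E (A ⨯ B) A) ∧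
      IsMapSpan (⟨A ⨯ B, 𝟙 _, Limits.prod.snd⟩ : SpanT E (A ⨯ B) B) ∧
      -- the comparison functor is essentially surjective on maps
      (∀ (C : E) (f : SpanT E C A) (g : SpanT E C B), IsMapSpan f → IsMapSpan g →
        ∃ h : SpanT E C (A ⨯ B), IsMapSpan h ∧
          (∃ φ : Span2 (spanComp h ⟨A ⨯ B, 𝟙 _, Limits.prod.fst⟩) f, IsSpan2Iso φ) ∧
          (∃ ψ : Span2 (spanComp h ⟨A ⨯ B, 𝟙 _, Limits.prod.snd⟩) g, IsSpan2Iso ψ)) ∧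
      -- and fully faithful on maps
      (∀ (C : E) (h h' : SpanT E C (A ⨯ B)), IsMapSpan h → IsMapSpan h' →
        ∀ (β : Span2 (spanComp h ⟨A ⨯ B, 𝟙 _, Limits.prod.fst⟩)
                     (spanComp h' ⟨A ⨯ B, 𝟙 _, Limits.prod.fst⟩))
          (γ : Span2 (spanComp h ⟨A ⨯ B, 𝟙 _, Limits.prod.snd⟩)
                     (spanComp h' ⟨A ⨯ B, 𝟙 _, Limits.prod.snd⟩)),
          ∃! α : Span2 h h',
            whiskerRSpan α ⟨A ⨯ B, 𝟙 _, Limits.prod.fst⟩ = β ∧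
            whiskerRSpan α ⟨A ⨯ B, 𝟙 _, Limits.prod.snd⟩ = γ)) ∧
    -- (ii) local terminal objects
    (∀ (A B : E) (s : SpanT E A B),
      Nonempty (Span2 s ⟨A ⨯ B, Limits.prod.fst, Limits.prod.snd⟩) ∧
      ∀ φ ψ : Span2 s ⟨A ⨯ B, Limits.prod.fst, Limits.prod.snd⟩, φ = ψ) ∧
    -- (ii) binary local products, computed by pullback over A ⨯ B
    (∀ (A B : E) (s t : SpanT E A B),
      ∃ (P : SpanT E A B) (π : Span2 P s) (ρ : Span2 P t),
        P.R = pullback (prod.lift s.l s.r) (prod.lift t.l t.r) ∧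
        ∀ (L : SpanT E A B) (u : Span2 L s) (v : Span2 L t),
          ∃! w : Span2 L P, w.vcomp π = u ∧ w.vcomp ρ = v) := by
  refine ⟨?_, ?_, ?_, ?_⟩
  · -- terminal object of Map(Span(E))
    intro A
    refine ⟨inferInstanceAs (IsIso (𝟙 A)), ?_⟩
    intro m m' hm hm'
    haveI : IsIso m.l := hm
    haveI : IsIso m'.l := hm'
    refine ⟨⟨⟨m.l ≫ inv m'.l, by simp, terminal.hom_ext _ _⟩⟩, ?_⟩
    intro φ ψ
    apply Span2.ext'
    calc φ.k = (φ.k ≫ m'.l) ≫ inv m'.l := by simp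
      _ = (ψ.k ≫ m'.l) ≫ inv m'.l := by rw [φ.wl, ψ.wl]
      _ = ψ.k := by simp
  · -- binary products in Map(Span(E))
    intro A B
    refine ⟨inferInstanceAs (IsIso (𝟙 (A ⨯ B))), inferInstanceAs (IsIso (𝟙 (A ⨯ B))), ?_, ?_⟩
    · -- essential surjectivity
      intro C f g hf hg
      haveI : IsIso f.l := hf
      haveI : IsIso g.l := hg
      refine ⟨⟨C, 𝟙 C, prod.lift (inv f.l ≫ f.r) (inv g.l ≫ g.r)⟩,
        inferInstanceAs (IsIso (𝟙 C)), ?_, ?_⟩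
      · exact esAux _ _ f (by simp)
      · exact esAux _ _ g (by simp)
    · -- full faithfulness
      intro C h h' hh hh'
      haveI : IsIso h.l := hh
      haveI : IsIso h'.l := hh'
      intro β γ
      have hwr : (h.l ≫ inv h'.l) ≫ h'.r = h.r := by
        apply Limits.prod.hom_ext
        · simpa using ffAux h h' prod.fst β
        · simpa using ffAux h h' prod.snd γ
      refine ⟨⟨h.l ≫ inv h'.l, by simp, hwr⟩, ⟨whiskAux _ _ β, whiskAux _ _ γ⟩, ?_⟩
      intro α' _
      apply Span2.ext'
      show α'.k = h.l ≫ inv h'.l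
      rw [← α'.wl]
      simp
  · -- local terminal objects
    intro A B s
    refine ⟨⟨⟨prod.lift s.l s.r, by simp, by simp⟩⟩, ?_⟩
    intro φ ψ
    apply Span2.ext'
    apply Limits.prod.hom_ext
    · show φ.k ≫ (⟨A ⨯ B, prod.fst, prod.snd⟩ : SpanT E A B).l =
        ψ.k ≫ (⟨A ⨯ B, prod.fst, prod.snd⟩ : SpanT E A B).l
      rw [φ.wl, ψ.wl]
    · show φ.k ≫ (⟨A ⨯ B, prod.fst, prod.snd⟩ : SpanT E A B).r =
        ψ.k ≫ (⟨A ⨯ B, prod.fst, prod.snd⟩ : SpanT E A B).r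
      rw [φ.wr, ψ.wr]
  · -- binary local products
    intro A B s t
    set ls := prod.lift s.l s.r
    set lt := prod.lift t.l t.r
    have hcl : pullback.fst ls lt ≫ s.l = pullback.snd ls lt ≫ t.l := by
      have := pullback.condition (f := ls) (g := lt)
      calc pullback.fst ls lt ≫ s.l = pullback.fst ls lt ≫ ls ≫ prod.fst := by simp [ls]
        _ = pullback.snd ls lt ≫ lt ≫ prod.fst := by rw [← Category.assoc, this, Category.assoc]
        _ = pullback.snd ls lt ≫ t.l := by simp [lt]
    have hcr : pullback.fst ls lt ≫ s.r = pullback.snd ls lt ≫ t.r := by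
      have := pullback.condition (f := ls) (g := lt)
      calc pullback.fst ls lt ≫ s.r = pullback.fst ls lt ≫ ls ≫ prod.snd := by simp [ls]
        _ = pullback.snd ls lt ≫ lt ≫ prod.snd := by rw [← Category.assoc, this, Category.assoc]
        _ = pullback.snd ls lt ≫ t.r := by simp [lt]
    refine ⟨⟨pullback ls lt, pullback.fst ls lt ≫ s.l, pullback.fst ls lt ≫ s.r⟩,
      ⟨pullback.fst ls lt, rfl, rfl⟩, ⟨pullback.snd ls lt, hcl.symm, hcr.symm⟩, rfl, ?_⟩
    intro L u v
    have hw : u.k ≫ ls = v.k ≫ lt := by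
      apply Limits.prod.hom_ext
      · simp [ls, lt, u.wl, v.wl]
      · simp [ls, lt, u.wr, v.wr]
    refine ⟨⟨pullback.lift u.k v.k hw, ?_, ?_⟩, ⟨?_, ?_⟩, ?_⟩
    · show pullback.lift u.k v.k hw ≫ pullback.fst ls lt ≫ s.l = L.l
      rw [← Category.assoc, pullback.lift_fst, u.wl]
    · show pullback.lift u.k v.k hw ≫ pullback.fst ls lt ≫ s.r = L.r
      rw [← Category.assoc, pullback.lift_fst, u.wr]
    · apply Span2.ext'
      show pullback.lift u.k v.k hw ≫ pullback.fst ls lt = u.k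
      simp
    · apply Span2.ext'
      show pullback.lift u.k v.k hw ≫ pullback.snd ls lt = v.k
      simp
    · intro w ⟨hwu, hwv⟩
      apply Span2.ext'
      have h1 : w.k ≫ pullback.fst ls lt = u.k := congrArg Span2.k hwu
      have h2 : w.k ≫ pullback.snd ls lt = v.k := congrArg Span2.k hwv
      apply pullback.hom_ext <;> simp [h1, h2]
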